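/- arXiv:2207.06552 — 2 statements merged into one kernel-verified Lean document; each statement's English description precedes it below -/
import Mathlib

section
/- Let m be a positive integer with at least 4 positive divisors d₁ < d₂ < ... < d_{d(m)}, and let A be the d(m)×d(m) matrix with entries A_{ij} = ∑_{n=1}^{m/d_j} (d_j·n)^{i-1}. Then A is singular; in particular, the row vector (0, m², −3m, 2, 0, ..., 0) lies in the left kernel of A. -/
lemma sum_pow1 (N : ℕ) : ∑ n ∈ Finset.Icc 1 N, (n : ℚ) = N * (N + 1) / 2 := by
  induction N with
  | zero => simp
  | succ k ih =>
      rw [Finset.sum_Icc_succ_top (by omega), ih]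
      push_cast; ring

lemma sum_pow2 (N : ℕ) : ∑ n ∈ Finset.Icc 1 N, (n : ℚ) ^ 2 = N * (N + 1) * (2 * N + 1) / 6 := by
  induction N with
  | zero => simp
  | succ k ih =>
      rw [Finset.sum_Icc_succ_top (by omega), ih]
      push_cast; ring

lemma sum_pow3 (N : ℕ) : ∑ n ∈ Finset.Icc 1 N, (n : ℚ) ^ 3 = (N * (N + 1) / 2) ^ 2 := by
  induction N with
  | zero => simp
  | succ k ih =>
      rw [Finset.sum_Icc_succ_top (by omega), ih]
      push_cast; ring

theorem matrix_A_singular (m : ℕ) (hm : 0 < m) (h4 : 4 ≤ m.divisors.card)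
    (e : Fin m.divisors.card ≃o m.divisors)
    (A : Matrix (Fin m.divisors.card) (Fin m.divisors.card) ℚ)
    (hA : ∀ i j, A i j = ∑ n ∈ Finset.Icc 1 (m / ((e j : ℕ))),
      (((e j : ℕ) : ℚ) * n) ^ (i : ℕ))
    (c : Fin m.divisors.card → ℚ)
    (hc : ∀ i, c i = if (i : ℕ) = 1 then (m : ℚ) ^ 2
      else if (i : ℕ) = 2 then -3 * m else if (i : ℕ) = 3 then 2 else 0) :
    Matrix.vecMul c A = 0 ∧ A.det = 0 := by
  have hmain : Matrix.vecMul c A = 0 := by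
    funext j
    set d : ℕ := (e j : ℕ) with hd
    have hdvd : d ∣ m := (Nat.mem_divisors.mp (e j).2).1
    set N : ℕ := m / d with hN
    have hdN : (d : ℚ) * N = m := by
      exact_mod_cast congrArg (Nat.cast : ℕ → ℚ) (Nat.mul_div_cancel' hdvd)
    set i1 : Fin m.divisors.card := ⟨1, by omega⟩
    set i2 : Fin m.divisors.card := ⟨2, by omega⟩
    set i3 : Fin m.divisors.card := ⟨3, by omega⟩
    have hcol : ∀ k : ℕ, ∀ i : Fin m.divisors.card, (i : ℕ) = k →
        A i j = (d : ℚ) ^ k * ∑ n ∈ Finset.Icc 1 N, (n : ℚ) ^ k := by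
      intro k i hik
      rw [hA, hik, Finset.mul_sum]
      exact Finset.sum_congr rfl fun n _ => by rw [mul_pow]
    have hsum : Matrix.vecMul c A j = ∑ i, c i * A i j := by
      simp [Matrix.vecMul, dotProduct]
    have hsub : ∑ i, c i * A i j = ∑ i ∈ ({i1, i2, i3} : Finset _), c i * A i j := by
      refine (Finset.sum_subset (Finset.subset_univ _) ?_).symm
      intro i _ hi
      simp only [Finset.mem_insert, Finset.mem_singleton] at hi
      push_neg at hi
      obtain ⟨h1, h2, h3⟩ := hi
      have : (i : ℕ) ≠ 1 ∧ (i : ℕ) ≠ 2 ∧ (i : ℕ) ≠ 3 := by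
        refine ⟨fun h => h1 ?_, fun h => h2 ?_, fun h => h3 ?_⟩ <;> exact Fin.ext h
      rw [hc i, if_neg this.1, if_neg this.2.1, if_neg this.2.2, zero_mul]
    have h12 : i1 ≠ i2 := by simp [i1, i2, Fin.ext_iff]
    have h13 : i1 ≠ i3 := by simp [i1, i3, Fin.ext_iff]
    have h23 : i2 ≠ i3 := by simp [i2, i3, Fin.ext_iff]
    rw [Pi.zero_apply, hsum, hsub]
    rw [Finset.sum_insert (by simp [h12, h13]), Finset.sum_insert (by simp [h23]),
      Finset.sum_singleton]
    rw [hc i1, hc i2, hc i3]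
    simp only [i1, i2, i3]
    norm_num
    rw [hcol 1 i1 rfl, hcol 2 i2 rfl, hcol 3 i3 rfl]
    simp only [pow_one]
    rw [sum_pow1, sum_pow2, sum_pow3, ← hdN]
    ring
  refine ⟨hmain, Matrix.exists_vecMul_eq_zero_iff.mp ⟨c, ?_, hmain⟩⟩
  intro h
  have := congrFun h ⟨3, by omega⟩
  rw [hc] at this
  norm_num at this
end

section
/- Let m be a positive integer with D = d(m) ≥ 4 divisors and suppose b₁, ..., b_m are complex numbers satisfying ∑_{k=1}^m b_k k^r = 0 for r = 0, 1, ..., D−1. Then the series Z_m(s) = ∑_{n=0}^∞ ∑_{k=1}^m b_k (mn+k)^{−s} (with each inner sum over k taken as a block) converges for all s with Re(s) > 2 − D, and defines an analytic function on that half-plane. -/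
open Filter Set Complex Finset

noncomputable def Efun (w : ℂ) (c : ℝ) (x : ℝ) : ℂ := Complex.exp (w * Real.log (c + x))

lemma Efun_hasDerivAt (w : ℂ) {c x : ℝ} (h : 0 < c + x) :
    HasDerivAt (Efun w c) (w * Efun (w - 1) c x) x := by
  have h1 : HasDerivAt (fun y : ℝ => c + y) 1 x := (hasDerivAt_id x).const_add c
  have h2 : HasDerivAt (fun y : ℝ => Real.log (c + y)) ((c + x)⁻¹) x := by
    have := (Real.hasDerivAt_log h.ne').comp x h1; rw [mul_one] at this; exact this
  have h3 : HasDerivAt (fun y : ℝ => ((Real.log (c + y) : ℝ) : ℂ)) (((c + x)⁻¹ : ℝ) : ℂ) x :=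
    h2.ofReal_comp
  have h4 := (h3.const_mul w).cexp
  have hexp : Complex.exp ((Real.log (c + x) : ℝ) : ℂ) = ((c + x : ℝ) : ℂ) := by
    rw [← Complex.ofReal_exp, Real.exp_log h]
  have hne : ((c + x : ℝ) : ℂ) ≠ 0 := by
    exact_mod_cast Complex.ofReal_ne_zero.mpr h.ne'
  convert h4 using 1
  · rfl
  simp only [Efun]
  rw [sub_mul, one_mul, Complex.exp_sub, hexp]
  push_cast
  field_simp

lemma Efun_contDiffOn (w : ℂ) {c : ℝ} (hc : 0 ≤ c) {n : WithTop ℕ∞} {m' : ℝ} :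
    ContDiffOn ℝ n (Efun w c) (Icc (1:ℝ) m') := by
  have hsub : Icc (1:ℝ) m' ⊆ {x : ℝ | 0 < c + x} := by
    intro x hx
    have := hx.1
    simp only [mem_setOf_eq]
    linarith
  have h1 : ContDiffOn ℝ n (fun y : ℝ => Real.log (c + y)) {x : ℝ | 0 < c + x} := by
    apply Real.contDiffOn_log.comp ((contDiff_const.add contDiff_id).contDiffOn)
    intro x hx
    simp only [mem_setOf_eq] at hx
    exact mem_compl_singleton_iff.mpr (ne_of_gt hx)
  have h2 : ContDiffOn ℝ n (fun y : ℝ => ((Real.log (c + y) : ℝ) : ℂ)) {x : ℝ | 0 < c + x} :=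
    Complex.ofRealCLM.contDiff.comp_contDiffOn h1
  have h3 : ContDiffOn ℝ n (fun y : ℝ => w * ((Real.log (c + y) : ℝ) : ℂ)) {x : ℝ | 0 < c + x} :=
    contDiffOn_const.mul h2
  exact (Complex.contDiff_exp.comp_contDiffOn h3).mono hsub

lemma Efun_iteratedDerivWithin {m' : ℝ} (hm' : 1 < m') {c : ℝ} (hc : 0 ≤ c) (w : ℂ) (j : ℕ) :
    ∀ x ∈ Icc (1:ℝ) m', iteratedDerivWithin j (Efun w c) (Icc 1 m') x
      = (∏ i ∈ Finset.range j, (w - i)) * Efun (w - j) c x := by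
  have hud : UniqueDiffOn ℝ (Icc (1:ℝ) m') := uniqueDiffOn_Icc hm'
  induction j with
  | zero => intro x hx; simp
  | succ j ih =>
    intro x hx
    have hpos : ∀ y ∈ Icc (1:ℝ) m', 0 < c + y := by
      intro y hy; have := hy.1; linarith
    rw [iteratedDerivWithin_succ]
    have hcongr : derivWithin (iteratedDerivWithin j (Efun w c) (Icc 1 m')) (Icc 1 m') x
        = derivWithin (fun y => (∏ i ∈ Finset.range j, (w - i)) * Efun (w - j) c y) (Icc 1 m') x :=
      derivWithin_congr (fun y hy => ih y hy) (ih x hx)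
    rw [hcongr]
    have hd : HasDerivAt (fun y => (∏ i ∈ Finset.range j, (w - i)) * Efun (w - j) c y)
        ((∏ i ∈ Finset.range j, (w - i)) * ((w - j) * Efun (w - j - 1) c x)) x :=
      (Efun_hasDerivAt (w - j) (hpos x hx)).const_mul _
    rw [hd.hasDerivWithinAt.derivWithin (hud x hx)]
    rw [Finset.prod_range_succ]
    have : w - (j + 1 : ℕ) = w - j - 1 := by push_cast; ring
    rw [this]
    ring

lemma Efun_norm {c : ℝ} (hc : 0 < c + x) (w : ℂ) :
    ‖Efun w c x‖ = (c + x) ^ w.re := by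
  rw [Efun, Complex.norm_exp, Real.rpow_def_of_pos hc]
  rw [mul_comm w]
  rw [Complex.re_ofReal_mul, mul_comm]

lemma block_bound (m : ℕ) (hm4 : 4 ≤ m) (b : ℕ → ℂ) (D : ℕ) (hD : 4 ≤ D)
    (hpoly : ∀ i : ℕ, i < D → ∑ k ∈ Finset.Icc 1 m, b k * ((k:ℂ) - 1) ^ i = 0)
    (s : ℂ) (σ₀ R : ℝ) (hσ : σ₀ ≤ s.re) (hσ₀ : 0 < σ₀ + D) (hR : ‖s‖ ≤ R) (n : ℕ) :
    ‖∑ k ∈ Finset.Icc 1 m, b k * ((m : ℂ) * n + k) ^ (-s)‖ ≤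
      ((∑ k ∈ Finset.Icc 1 m, ‖b k‖) * ((∏ i ∈ Finset.range D, (R + i)) * (m:ℝ)^D / ((Nat.factorial (D - 1)) : ℝ)))
        * ((n:ℝ)+1) ^ (-(σ₀ + (D:ℝ))) := by
  obtain ⟨DD, rfl⟩ : ∃ e, e + 1 = D := ⟨D - 1, by omega⟩
  have hR0 : 0 ≤ R := le_trans (norm_nonneg s) hR
  have hm1 : (1:ℝ) < m := by exact_mod_cast (by omega : 1 < m)
  set c : ℝ := (m:ℝ) * n with hc_def
  have hc : 0 ≤ c := by positivity
  have hmemk : ∀ k : ℕ, k ∈ Finset.Icc 1 m → (k:ℝ) ∈ Icc (1:ℝ) (m:ℝ) := by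
    intro k hk
    obtain ⟨h1, h2⟩ := Finset.mem_Icc.mp hk
    exact ⟨by exact_mod_cast h1, by exact_mod_cast h2⟩
  have hposy : ∀ y ∈ Icc (1:ℝ) (m:ℝ), 0 < c + y := by
    intro y hy; have := hy.1; linarith
  -- rewrite the terms as Efun
  have hterm : ∀ k ∈ Finset.Icc 1 m, b k * ((m : ℂ) * n + k) ^ (-s)
      = b k * Efun (-s) c (k:ℝ) := by
    intro k hk
    have hpos : (0:ℝ) < c + k := hposy _ (hmemk k hk)
    have hcast : ((m:ℂ) * n + k) = ((c + (k:ℝ) : ℝ) : ℂ) := by rw [hc_def]; push_cast; ring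
    rw [hcast, Complex.cpow_def_of_ne_zero (by exact_mod_cast ne_of_gt hpos),
      ← Complex.ofReal_log hpos.le, mul_comm ((Real.log (c + (k:ℝ)) : ℂ)) (-s)]
    rfl
  rw [Finset.sum_congr rfl hterm]
  set g : ℝ → ℂ := Efun (-s) c with hg_def
  set s' : Set ℝ := Icc (1:ℝ) (m:ℝ) with hs'_def
  set Cval : ℝ := (∏ i ∈ Finset.range (DD+1), (R + i)) * ((n:ℝ)+1) ^ (-(σ₀ + ((DD+1:ℕ):ℝ)))
    with hCval_def
  have hprod_nonneg : (0:ℝ) ≤ ∏ i ∈ Finset.range (DD+1), (R + i) :=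
    Finset.prod_nonneg fun i _ => by positivity
  have hCval_nonneg : 0 ≤ Cval := by
    apply mul_nonneg hprod_nonneg (Real.rpow_nonneg (by positivity) _)
  -- bound on iterated derivative
  have hC : ∀ y ∈ s', ‖iteratedDerivWithin (DD + 1) g s' y‖ ≤ Cval := by
    intro y hy
    rw [hg_def, hs'_def] at *
    rw [Efun_iteratedDerivWithin hm1 hc (-s) (DD+1) y hy, norm_mul]
    have h1 : ‖∏ i ∈ Finset.range (DD+1), (-s - (i:ℂ))‖ ≤ ∏ i ∈ Finset.range (DD+1), (R + i) := by
      rw [norm_prod]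
      apply Finset.prod_le_prod (fun i _ => norm_nonneg _)
      intro i _
      have : -s - (i:ℂ) = -(s + i) := by ring
      rw [this, norm_neg]
      calc ‖s + (i:ℂ)‖ ≤ ‖s‖ + ‖(i:ℂ)‖ := norm_add_le _ _
        _ ≤ R + i := by rw [Complex.norm_natCast]; linarith
    have hpos : 0 < c + y := hposy y hy
    have h2 : ‖Efun (-s - ((DD+1:ℕ):ℂ)) c y‖ ≤ ((n:ℝ)+1) ^ (-(σ₀ + ((DD+1:ℕ):ℝ))) := by
      rw [Efun_norm hpos]
      have hre : (-s - ((DD+1:ℕ):ℂ)).re = -(s.re + ((DD+1:ℕ):ℝ)) := by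
        simp only [Complex.sub_re, Complex.neg_re, Complex.natCast_re]
        push_cast
        ring
      rw [hre]
      have hnp : -(s.re + ((DD+1:ℕ):ℝ)) ≤ 0 := by
        have : (0:ℝ) < σ₀ + ((DD+1:ℕ):ℝ) := hσ₀
        linarith
      have hle1 : (n:ℝ) + 1 ≤ c + y := by
        have h1m : (n:ℝ) ≤ c := by
          rw [hc_def]
          nlinarith [Nat.cast_nonneg (α := ℝ) n, hm1]
        have := hy.1
        linarith
      calc (c + y) ^ (-(s.re + ((DD+1:ℕ):ℝ)))
          ≤ ((n:ℝ)+1) ^ (-(s.re + ((DD+1:ℕ):ℝ))) :=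
            Real.rpow_le_rpow_of_nonpos (by positivity) hle1 hnp
        _ ≤ ((n:ℝ)+1) ^ (-(σ₀ + ((DD+1:ℕ):ℝ))) := by
            apply Real.rpow_le_rpow_of_exponent_le (by simp)
            linarith
    calc ‖∏ i ∈ Finset.range (DD+1), (-s - (i:ℂ))‖ * ‖Efun (-s - ((DD+1:ℕ):ℂ)) c y‖
        ≤ (∏ i ∈ Finset.range (DD+1), (R + i)) * (((n:ℝ)+1) ^ (-(σ₀ + ((DD+1:ℕ):ℝ)))) :=
          mul_le_mul h1 h2 (norm_nonneg _) hprod_nonneg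
      _ = Cval := rfl
  -- smoothness
  have hcd : ContDiffOn ℝ ((DD:ℕ) + 1) g s' := Efun_contDiffOn (-s) hc
  -- Taylor remainder bound
  have hT : ∀ k ∈ Finset.Icc 1 m,
      ‖g (k:ℝ) - taylorWithinEval g DD s' 1 (k:ℝ)‖ ≤ Cval * (m:ℝ)^(DD+1) / ((Nat.factorial DD) : ℝ) := by
    intro k hk
    have hxk := hmemk k hk
    have := taylor_mean_remainder_bound (le_of_lt hm1) hcd hxk hC
    refine le_trans this ?_
    apply div_le_div_of_nonneg_right ?_ (by positivity)
    apply mul_le_mul_of_nonneg_left ?_ hCval_nonneg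
    apply pow_le_pow_left₀ (by linarith [hxk.1]) (by linarith [hxk.2])
  -- the Taylor polynomial summed against b vanishes
  have hTzero : ∑ k ∈ Finset.Icc 1 m, b k * taylorWithinEval g DD s' 1 (k:ℝ) = 0 := by
    have hinner : ∀ i ∈ Finset.range (DD + 1),
        ∑ k ∈ Finset.Icc 1 m,
          b k * ((((Nat.factorial i : ℝ))⁻¹ * ((k:ℝ) - 1) ^ i) • iteratedDerivWithin i g s' 1) = 0 := by
      intro i hi
      have h0 := hpoly i (Finset.mem_range.mp hi)
      calc ∑ k ∈ Finset.Icc 1 m,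
            b k * ((((Nat.factorial i : ℝ))⁻¹ * ((k:ℝ) - 1) ^ i) • iteratedDerivWithin i g s' 1)
          = (((Nat.factorial i : ℝ))⁻¹ : ℂ) * iteratedDerivWithin i g s' 1
              * ∑ k ∈ Finset.Icc 1 m, b k * ((k:ℂ) - 1) ^ i := by
            rw [Finset.mul_sum]
            apply Finset.sum_congr rfl
            intro k hk
            rw [Complex.real_smul]
            push_cast
            ring
        _ = 0 := by rw [h0, mul_zero]
    calc ∑ k ∈ Finset.Icc 1 m, b k * taylorWithinEval g DD s' 1 (k:ℝ)
        = ∑ k ∈ Finset.Icc 1 m, ∑ i ∈ Finset.range (DD + 1),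
            b k * ((((Nat.factorial i : ℝ))⁻¹ * ((k:ℝ) - 1) ^ i) • iteratedDerivWithin i g s' 1) := by
          apply Finset.sum_congr rfl
          intro k hk
          rw [taylor_within_apply, Finset.mul_sum]
      _ = ∑ i ∈ Finset.range (DD + 1), ∑ k ∈ Finset.Icc 1 m,
            b k * ((((Nat.factorial i : ℝ))⁻¹ * ((k:ℝ) - 1) ^ i) • iteratedDerivWithin i g s' 1) :=
          Finset.sum_comm
      _ = 0 := Finset.sum_eq_zero hinner
  -- put everything together
  have hsplit : ∑ k ∈ Finset.Icc 1 m, b k * g (k:ℝ)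
      = ∑ k ∈ Finset.Icc 1 m, b k * (g (k:ℝ) - taylorWithinEval g DD s' 1 (k:ℝ)) := by
    simp_rw [mul_sub]
    rw [Finset.sum_sub_distrib, hTzero, sub_zero]
  rw [hsplit]
  calc ‖∑ k ∈ Finset.Icc 1 m, b k * (g (k:ℝ) - taylorWithinEval g DD s' 1 (k:ℝ))‖
      ≤ ∑ k ∈ Finset.Icc 1 m, ‖b k * (g (k:ℝ) - taylorWithinEval g DD s' 1 (k:ℝ))‖ :=
        norm_sum_le _ _
    _ ≤ ∑ k ∈ Finset.Icc 1 m, ‖b k‖ * (Cval * (m:ℝ)^(DD+1) / ((Nat.factorial DD) : ℝ)) := by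
        apply Finset.sum_le_sum
        intro k hk
        rw [norm_mul]
        exact mul_le_mul_of_nonneg_left (hT k hk) (norm_nonneg _)
    _ = (∑ k ∈ Finset.Icc 1 m, ‖b k‖) * (Cval * (m:ℝ)^(DD+1) / ((Nat.factorial DD) : ℝ)) := by
        rw [← Finset.sum_mul]
    _ = ((∑ k ∈ Finset.Icc 1 m, ‖b k‖) * ((∏ i ∈ Finset.range (DD+1), (R + i))
          * (m:ℝ)^(DD+1) / ((Nat.factorial (DD + 1 - 1)) : ℝ)))
        * ((n:ℝ)+1) ^ (-(σ₀ + ((DD+1:ℕ):ℝ))) := by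
        rw [hCval_def]
        simp only [Nat.add_sub_cancel]
        ring

lemma poly_vanish (m : ℕ) (b : ℕ → ℂ) (D : ℕ) (hD : 1 ≤ D)
    (hb : ∀ r : ℕ, r ≤ D - 1 → ∑ k ∈ Finset.Icc 1 m, b k * (k : ℂ) ^ r = 0)
    (i : ℕ) (hi : i < D) : ∑ k ∈ Finset.Icc 1 m, b k * ((k:ℂ) - 1) ^ i = 0 := by
  have hb' : ∀ j : ℕ, j ≤ i → ∑ k ∈ Finset.Icc 1 m, b k * (k:ℂ) ^ j = 0 :=
    fun j hj => hb j (by omega)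
  calc ∑ k ∈ Finset.Icc 1 m, b k * ((k:ℂ) - 1) ^ i
      = ∑ k ∈ Finset.Icc 1 m, ∑ j ∈ Finset.range (i+1),
          b k * ((-1)^(j+i) * (k:ℂ)^j * 1^(i-j) * (i.choose j)) := by
        apply Finset.sum_congr rfl; intro k _
        rw [sub_pow, Finset.mul_sum]
    _ = ∑ j ∈ Finset.range (i+1), ((-1:ℂ)^(j+i) * (i.choose j))
          * ∑ k ∈ Finset.Icc 1 m, b k * (k:ℂ)^j := by
        rw [Finset.sum_comm]
        apply Finset.sum_congr rfl; intro j _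
        rw [Finset.mul_sum]; apply Finset.sum_congr rfl; intro k _; ring
    _ = 0 := Finset.sum_eq_zero fun j hj => by
        rw [hb' j (Nat.lt_succ_iff.mp (Finset.mem_range.mp hj)), mul_zero]

open Filter in
theorem Zm_converges_and_analytic (m : ℕ) (hm : 0 < m) (h4 : 4 ≤ m.divisors.card)
    (b : ℕ → ℂ)
    (hb : ∀ r : ℕ, r ≤ m.divisors.card - 1 →
      ∑ k ∈ Finset.Icc 1 m, b k * (k : ℂ) ^ r = 0) :
    ∃ Z : ℂ → ℂ,
      (∀ s : ℂ, 2 - (m.divisors.card : ℝ) < s.re →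
        Tendsto (fun N : ℕ => ∑ n ∈ Finset.range (N + 1),
          ∑ k ∈ Finset.Icc 1 m, b k * ((m : ℂ) * n + k) ^ (-s)) atTop (nhds (Z s))) ∧
      AnalyticOn ℂ Z {s : ℂ | 2 - (m.divisors.card : ℝ) < s.re} := by
  set D := m.divisors.card with hD_def
  have hDm : D ≤ m := by
    have hsub : m.divisors ⊆ Finset.Icc 1 m := by
      intro d hd
      rw [Nat.mem_divisors] at hd
      exact Finset.mem_Icc.mpr ⟨Nat.pos_of_dvd_of_pos hd.1 hm, Nat.le_of_dvd hm hd.1⟩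
    simpa [Nat.card_Icc] using Finset.card_le_card hsub
  have hm4 : 4 ≤ m := le_trans h4 hDm
  have hD4 : (4:ℝ) ≤ (D:ℝ) := by exact_mod_cast h4
  have hpoly := poly_vanish m b D (by omega) hb
  set F : ℕ → ℂ → ℂ := fun n s => ∑ k ∈ Finset.Icc 1 m, b k * ((m : ℂ) * n + k) ^ (-s)
    with hF_def
  set U : Set ℂ := {s : ℂ | 2 - (D : ℝ) < s.re} with hU_def
  have hσD : ∀ σ₀ : ℝ, 2 - (D:ℝ) < σ₀ → 0 < σ₀ + (D:ℝ) := by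
    intro σ₀ h; linarith
  have hsummable : ∀ σ₀ : ℝ, 2 - (D:ℝ) < σ₀ →
      Summable (fun n : ℕ => ((n:ℝ)+1) ^ (-(σ₀ + (D:ℝ)))) := by
    intro σ₀ hσ₀
    have h1 : Summable (fun n : ℕ => (n:ℝ) ^ (-(σ₀ + (D:ℝ)))) := by
      rw [Real.summable_nat_rpow]
      linarith
    have h2 := (summable_nat_add_iff 1).mpr h1
    apply h2.congr
    intro n
    push_cast
    ring_nf
  have hbound : ∀ (s : ℂ) (σ₀ R : ℝ), σ₀ ≤ s.re → 0 < σ₀ + (D:ℝ) → ‖s‖ ≤ R → ∀ n : ℕ,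
      ‖F n s‖ ≤ ((∑ k ∈ Finset.Icc 1 m, ‖b k‖) * ((∏ i ∈ Finset.range D, (R + i))
          * (m:ℝ)^D / ((Nat.factorial (D - 1)) : ℝ))) * ((n:ℝ)+1) ^ (-(σ₀ + (D:ℝ))) :=
    fun s σ₀ R h1 h2 h3 n =>
      block_bound m hm4 b D h4 hpoly s σ₀ R h1 (by exact_mod_cast h2) h3 n
  have hFsummable : ∀ s : ℂ, 2 - (D:ℝ) < s.re → Summable (fun n => F n s) := by
    intro s hs
    apply Summable.of_norm_bounded ((hsummable s.re hs).mul_left _)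
    intro n
    exact hbound s s.re ‖s‖ le_rfl (hσD _ hs) le_rfl n
  refine ⟨fun s => ∑' n, F n s, ?_, ?_⟩
  · intro s hs
    have h1 := ((hFsummable s hs).hasSum).tendsto_sum_nat
    exact h1.comp (tendsto_add_atTop_nat 1)
  · have hUopen : IsOpen U := isOpen_lt continuous_const Complex.continuous_re
    have hdiffN : ∀ N : ℕ, DifferentiableOn ℂ (fun s => ∑ n ∈ Finset.range N, F n s) U := by
      intro N
      apply Differentiable.differentiableOn
      apply Differentiable.fun_sum
      intro n _
      apply Differentiable.fun_sum
      intro k hk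
      have hk1 : 1 ≤ k := (Finset.mem_Icc.mp hk).1
      have hne : ((m:ℂ) * n + k) ≠ 0 := by
        have : ((m:ℂ) * n + k) = (((m * n + k : ℕ)):ℂ) := by push_cast; ring
        rw [this]
        have hp : 0 < m * n + k := Nat.add_pos_right _ (by omega)
        exact_mod_cast Nat.cast_ne_zero.mpr hp.ne'
      exact (differentiable_const (b k)).mul (differentiable_id.neg.const_cpow (Or.inl hne))
    have hTLU : TendstoLocallyUniformlyOn (fun N s => ∑ n ∈ Finset.range N, F n s)
        (fun s => ∑' n, F n s) atTop U := by
      rw [tendstoLocallyUniformlyOn_iff_forall_isCompact hUopen]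
      intro K hKU hK
      rcases K.eq_empty_or_nonempty with rfl | hne
      · exact tendstoUniformlyOn_empty
      · obtain ⟨z, hzK, hzmin⟩ := hK.exists_isMinOn hne Complex.continuous_re.continuousOn
        obtain ⟨r, hr⟩ := hK.isBounded.subset_closedBall 0
        have hσ₀ : 2 - (D:ℝ) < z.re := hKU hzK
        apply tendstoUniformlyOn_tsum_nat ((hsummable z.re hσ₀).mul_left _)
        intro n s hsK
        have hsR : ‖s‖ ≤ max r 0 := by
          have := hr hsK
          rw [Metric.mem_closedBall, dist_zero_right] at this
          exact le_trans this (le_max_left _ _)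
        exact hbound s z.re (max r 0) (hzmin hsK) (hσD _ hσ₀) hsR n
    have hdiff := hTLU.differentiableOn (Filter.Eventually.of_forall hdiffN) hUopen
    exact hdiff.analyticOn hUopen
end
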